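/- Assume q is a power of 2. Let δ ∈ F_{q²}* be an element whose multiplicative order n equals q−1 > 1 or q+1, set c = δ + δ^{-1}, let τ be the automorphism τ(x) = x, τ(y) = y + c, and set σ = τ·ω, so that σ(x) = x/(y+c) and σ(y) = 1/(y+c). Then σ has order n, the relation ω σ = σ^{n−1} ω holds, and the group D = ⟨τ, ω⟩ is isomorphic to the dihedral group of order 2n with presentation ⟨ω, σ | ω² = 1, σ^n = 1, ωσ = σ^{n−1}ω⟩. -/

import Mathlib

/-- Let `q` be a power of `2` and let `H = F_{q²}(x, y)` be the Hermitian
function field over `F_{q²}` defined by `y^q + y = x^(q+1)`, with involution automorphism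
`ω(x) = x/y`, `ω(y) = 1/y`.  Let `δ ∈ F_{q²}*` be an element whose multiplicative order
`n` equals `q - 1 > 1` or `q + 1`, set `c = δ + δ⁻¹`, let `τ` be the automorphism
`τ(x) = x`, `τ(y) = y + c`, and set `σ = τ·ω` (so that `σ(x) = x/(y + c)` and
`σ(y) = 1/(y + c)`).  Then `σ` has order `n`, the relation `ω σ = σ^(n-1) ω` holds, and
the group `D = ⟨τ, ω⟩` is isomorphic to the dihedral group of order `2n` (with
presentation `⟨ω, σ ∣ ω² = 1, σ^n = 1, ω σ = σ^(n-1) ω⟩`). -/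
theorem stmt_4 (q : ℕ) (hq : ∃ k : ℕ, 0 < k ∧ q = 2 ^ k)
    (Fq2 : Type*) [Field Fq2] [Fintype Fq2] (hcard : Fintype.card Fq2 = q ^ 2)
    (H : Type*) [Field H] [Algebra Fq2 H]
    (x y : H) (hgen : IntermediateField.adjoin Fq2 {x, y} = ⊤)
    (heq : y ^ q + y = x ^ (q + 1)) (hx : Transcendental Fq2 x)
    (hconst : ∀ z : H, IsAlgebraic Fq2 z → ∃ a : Fq2, algebraMap Fq2 H a = z)
    (ω : H ≃ₐ[Fq2] H) (hωx : ω x = x / y) (hωy : ω y = 1 / y)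
    (δ : Fq2) (hδ0 : δ ≠ 0) (n : ℕ) (hn : n = orderOf δ)
    (hord : (n = q - 1 ∧ 1 < n) ∨ n = q + 1)
    (c : Fq2) (hc : c = δ + δ⁻¹)
    (τ : H ≃ₐ[Fq2] H) (hτx : τ x = x) (hτy : τ y = y + algebraMap Fq2 H c)
    (σ : H ≃ₐ[Fq2] H) (hσ : σ = τ * ω) :
    orderOf σ = n ∧
    ω * σ = σ ^ (n - 1) * ω ∧
    Nonempty ((Subgroup.closure {τ, ω} : Subgroup (H ≃ₐ[Fq2] H)) ≃* DihedralGroup n) := by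
  classical
  obtain ⟨k, hk0, hqk⟩ := hq
  -- arithmetic facts about q and n
  have hq2 : 2 ≤ q := by
    rw [hqk]
    calc 2 = 2 ^ 1 := (pow_one 2).symm
    _ ≤ 2 ^ k := Nat.pow_le_pow_right (by norm_num) hk0
  have hqeven : 2 ∣ q := by rw [hqk]; exact dvd_pow_self 2 hk0.ne'
  have hn1 : 1 < n := by
    rcases hord with ⟨h, h1⟩ | h
    · exact h1
    · omega
  have hnodd : ¬ (2 ∣ n) := by rcases hord with ⟨h, h1⟩ | h <;> omega
  have hn3 : 3 ≤ n := by omega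
  -- characteristic 2
  haveI hp2 : Fact (Nat.Prime 2) := ⟨Nat.prime_two⟩
  obtain ⟨p, hcp⟩ := CharP.exists Fq2
  haveI := hcp
  obtain ⟨m, hp, hcardp⟩ := FiniteField.card Fq2 p
  have hpeq : p = 2 := by
    have h1 : p ∣ 2 ^ (k * 2) := by
      have : (2:ℕ) ^ (k * 2) = p ^ (m : ℕ) := by
        rw [← hcardp, hcard, hqk, ← pow_mul]
      rw [this]
      exact dvd_pow_self p m.ne_zero
    have h2 : p ∣ 2 := hp.dvd_of_dvd_pow h1
    exact (Nat.prime_dvd_prime_iff_eq hp Nat.prime_two).mp h2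
  subst hpeq
  haveI hcharH : CharP H 2 := charP_of_injective_algebraMap (algebraMap Fq2 H).injective 2
  -- notation
  set C := algebraMap Fq2 H with hCdef
  have hCinj : Function.Injective C := (algebraMap Fq2 H).injective
  have htwo : (2 : H) = 0 := CharTwo.two_eq_zero
  -- transcendence facts
  have hyt : Transcendental Fq2 y := by
    intro hy
    apply hx
    obtain ⟨a, ha⟩ := hconst y hy
    have h1 : x ^ (q + 1) = C (a ^ q + a) := by
      rw [← heq, ← ha, map_add, map_pow]
    have h2 : IsAlgebraic Fq2 (x ^ (q + 1)) := by
      rw [h1]; exact isAlgebraic_algebraMap _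
    exact h2.of_pow (by omega)
  have hyne : ∀ a : Fq2, y + C a ≠ 0 := by
    intro a h
    apply hyt
    have : y = C (-a) := by rw [map_neg]; exact eq_neg_of_add_eq_zero_left h
    rw [this]; exact isAlgebraic_algebraMap _
  have hy0 : y ≠ 0 := by simpa using hyne 0
  -- extensionality of automorphisms from values at x, y
  have hext : ∀ f : H ≃ₐ[Fq2] H, f x = x → f y = y → f = 1 := by
    intro f hfx hfy
    have key : ∀ z : H, f z = z := by
      intro z
      let S : IntermediateField Fq2 H :=
        { AlgHom.equalizer (f : H →ₐ[Fq2] H) (AlgHom.id Fq2 H) with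
          inv_mem' := fun a (ha : f a = a) => show f a⁻¹ = a⁻¹ by rw [map_inv₀, ha] }
      have hS : (⊤ : IntermediateField Fq2 H) ≤ S := by
        rw [← hgen]
        apply IntermediateField.adjoin_le_iff.mpr
        rintro t (rfl | rfl)
        · exact hfx
        · exact hfy
      exact hS trivial
    exact AlgEquiv.ext key
  have hcomm : ∀ (f : H ≃ₐ[Fq2] H) (a : Fq2), f (C a) = C a := fun f a => f.commutes a
  -- involutions
  have hτ2 : τ * τ = 1 := by
    apply hext
    · rw [AlgEquiv.mul_apply, hτx, hτx]
    · rw [AlgEquiv.mul_apply, hτy, map_add, hτy, hcomm, add_assoc,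
        CharTwo.add_self_eq_zero, add_zero]
  have hω2 : ω * ω = 1 := by
    apply hext
    · rw [AlgEquiv.mul_apply, hωx, map_div₀, hωx, hωy, one_div, div_eq_mul_inv, inv_inv,
        div_eq_mul_inv, inv_mul_cancel_right₀ hy0]
    · rw [AlgEquiv.mul_apply, hωy, one_div, map_inv₀, hωy, one_div, inv_inv]
  -- σ on x and y
  have hσy : σ y = (y + C c)⁻¹ := by
    rw [hσ, AlgEquiv.mul_apply, hωy, one_div, map_inv₀, hτy]
  have hσx : σ x = x * (y + C c)⁻¹ := by
    rw [hσ, AlgEquiv.mul_apply, hωx, div_eq_mul_inv, map_mul, map_inv₀, hτx, hτy]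
  -- δ facts
  have hδi0 : (δ⁻¹ : Fq2) ≠ 0 := inv_ne_zero hδ0
  have hδδ : C δ * C δ⁻¹ = 1 := by rw [← map_mul, mul_inv_cancel₀ hδ0, map_one]
  have hδne : C δ⁻¹ - C δ ≠ 0 := by
    intro h
    have h1 : (δ⁻¹ : Fq2) = δ := hCinj (sub_eq_zero.mp h)
    have h2 : δ ^ 2 = 1 := by
      have h4 := mul_inv_cancel₀ hδ0
      rw [h1] at h4; rw [pow_two]; exact h4
    have h3 : orderOf δ ∣ 2 := orderOf_dvd_of_pow_eq_one h2
    rw [← hn] at h3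
    have := Nat.le_of_dvd (by norm_num) h3
    omega
  -- the diagonalizing coordinates
  obtain ⟨z, hzdef⟩ : ∃ z : H, z = (y + C δ) / (y + C δ⁻¹) := ⟨_, rfl⟩
  obtain ⟨w, hwdef⟩ : ∃ w : H, w = x / (y + C δ⁻¹) := ⟨_, rfl⟩
  have hz0 : z ≠ 0 := by rw [hzdef]; exact div_ne_zero (hyne δ) (hyne δ⁻¹)
  have hyc : y + C c ≠ 0 := hyne c
  have hycδ : (y + C c)⁻¹ + C δ⁻¹ ≠ 0 := by
    intro h
    apply hyne δ⁻¹
    apply σ.injective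
    rw [map_add, hσy, hcomm, map_zero, h]
  have hcC : C c = C δ + C δ⁻¹ := by rw [hc, map_add]
  obtain ⟨u, hudef⟩ : ∃ u : H, u = (y + C c)⁻¹ := ⟨_, rfl⟩
  have hu' : u * (y + (C δ + C δ⁻¹)) = 1 := by
    rw [hudef, ← hcC]; exact inv_mul_cancel₀ hyc
  have huδ : u + C δ⁻¹ ≠ 0 := by rw [hudef]; exact hycδ
  have hσz : σ z = C (δ * δ) * z := by
    rw [hzdef, map_div₀, map_add, map_add, hcomm, hcomm, hσy, map_mul, ← hudef,
      ← mul_div_assoc, div_eq_div_iff huδ (hyne δ⁻¹)]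
    linear_combination (1 - C δ * C δ) * hu' + (u * C δ - C δ * y + 1 - C δ * C δ) * hδδ +
      (1 - C δ * C δ) * htwo
  have hσw : σ w = C δ * w := by
    rw [hwdef, map_div₀, map_add, hcomm, hσy, hσx, ← hudef,
      ← mul_div_assoc, div_eq_div_iff huδ (hyne δ⁻¹)]
    linear_combination x * hu' + (-x) * hδδ + (-(C δ * x * u)) * htwo
  -- iterates
  have hσkz : ∀ m : ℕ, (σ ^ m) z = C ((δ * δ) ^ m) * z := by
    intro m
    induction m with
    | zero => simp
    | succ m ih =>
      rw [pow_succ, AlgEquiv.mul_apply, hσz, map_mul, hcomm, ih, ← mul_assoc, ← map_mul,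
        ← pow_succ']
  have hσkw : ∀ m : ℕ, (σ ^ m) w = C (δ ^ m) * w := by
    intro m
    induction m with
    | zero => simp
    | succ m ih =>
      rw [pow_succ, AlgEquiv.mul_apply, hσw, map_mul, hcomm, ih, ← mul_assoc, ← map_mul,
        ← pow_succ']
  have hδn : δ ^ n = 1 := by rw [hn]; exact pow_orderOf_eq_one δ
  -- σ^n = 1
  have hσny : (σ ^ n) y = y := by
    have h1 : (σ ^ n) z = z := by
      rw [hσkz, mul_pow, hδn, one_mul, map_one, one_mul]
    have hd : (σ ^ n) y + C δ⁻¹ ≠ 0 := by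
      intro h
      apply hyne δ⁻¹
      apply (σ ^ n).injective
      rw [map_add, AlgEquiv.commutes, map_zero, h]
    rw [hzdef, map_div₀, map_add, map_add, AlgEquiv.commutes, AlgEquiv.commutes,
      div_eq_div_iff hd (hyne δ⁻¹)] at h1
    have h2 : ((σ ^ n) y - y) * (C δ⁻¹ - C δ) = 0 := by linear_combination h1
    rcases mul_eq_zero.mp h2 with h3 | h3
    · exact sub_eq_zero.mp h3
    · exact absurd h3 hδne
  have hσnx : (σ ^ n) x = x := by
    have h1 : (σ ^ n) w = w := by rw [hσkw, hδn, map_one, one_mul]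
    rw [hwdef, map_div₀, map_add, AlgEquiv.commutes, hσny,
      div_eq_div_iff (hyne δ⁻¹) (hyne δ⁻¹)] at h1
    exact mul_right_cancel₀ (hyne δ⁻¹) h1
  have hσn : σ ^ n = 1 := hext _ hσnx hσny
  -- order of σ
  have hords : orderOf σ = n := by
    have h1 : orderOf σ ∣ n := orderOf_dvd_of_pow_eq_one hσn
    have h2 : n ∣ orderOf σ := by
      have hz' : (σ ^ orderOf σ) z = z := by rw [pow_orderOf_eq_one]; simp
      rw [hσkz] at hz'
      have h3 : C ((δ * δ) ^ orderOf σ) = 1 :=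
        mul_right_cancel₀ hz0 (hz'.trans (one_mul z).symm)
      have h4 : ((δ * δ) : Fq2) ^ orderOf σ = 1 := hCinj (by rw [map_one]; exact h3)
      have h5 : orderOf δ ∣ 2 * orderOf σ := by
        apply orderOf_dvd_of_pow_eq_one
        rw [two_mul, pow_add, ← mul_pow]
        exact h4
      rw [← hn] at h5
      have h6 : Nat.Coprime n 2 := Nat.coprime_two_right.mpr (Nat.odd_iff.mpr (by omega))
      exact h6.dvd_of_dvd_mul_left h5
    exact Nat.dvd_antisymm h1 h2
  -- the relation
  have hωinv : ω⁻¹ = ω := inv_eq_of_mul_eq_one_right hω2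
  have hτinv : τ⁻¹ = τ := inv_eq_of_mul_eq_one_right hτ2
  have hσinv : σ⁻¹ = ω * τ := by rw [hσ, mul_inv_rev, hωinv, hτinv]
  have hrel : ω * σ = σ⁻¹ * ω := by rw [hσinv, hσ, mul_assoc]
  have hσpred : σ ^ (n - 1) = σ⁻¹ := by
    have h1 : σ ^ (n - 1) * σ = 1 := by
      rw [← pow_succ, Nat.sub_add_cancel (by omega), hσn]
    exact eq_inv_of_mul_eq_one_left h1
  refine ⟨hords, by rw [hσpred, hrel], ?_⟩
  -- the dihedral group isomorphism
  haveI : NeZero n := ⟨by omega⟩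
  haveI : Fact (1 < n) := ⟨hn1⟩
  have hconjσ : ω * σ * ω⁻¹ = σ⁻¹ := by
    rw [hωinv, hσinv, hσ, mul_assoc, mul_assoc, hω2, mul_one]
  have hconj : ∀ m : ℕ, ω * σ ^ m = σ⁻¹ ^ m * ω := by
    intro m
    calc ω * σ ^ m = ω * σ ^ m * ω⁻¹ * ω := by group
    _ = (ω * σ * ω⁻¹) ^ m * ω := by rw [conj_pow]
    _ = σ⁻¹ ^ m * ω := by rw [hconjσ]
  set g : ZMod n → (H ≃ₐ[Fq2] H) := fun i => σ ^ i.val with hgdef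
  have hgadd : ∀ i j : ZMod n, g (i + j) = g i * g j := by
    intro i j
    show σ ^ _ = σ ^ _ * σ ^ _
    rw [← pow_add]
    apply pow_eq_pow_iff_modEq.mpr
    rw [hords, ZMod.val_add]
    exact Nat.mod_modEq _ n
  have hg0 : g 0 = 1 := by show σ ^ _ = 1; rw [ZMod.val_zero, pow_zero]
  have hgneg : ∀ i, g (-i) = (g i)⁻¹ := fun i =>
    eq_inv_of_mul_eq_one_left (by rw [← hgadd, neg_add_cancel, hg0])
  have hgconj : ∀ i, ω * g i = g (-i) * ω := by
    intro i
    rw [hgneg]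
    show ω * σ ^ _ = (σ ^ _)⁻¹ * ω
    rw [hconj, inv_pow]
  have hgconj' : ∀ i, g i * ω = ω * g (-i) := by
    intro i
    have h1 := hgconj (-i)
    rw [neg_neg] at h1
    exact h1.symm
  let F : DihedralGroup n →* (H ≃ₐ[Fq2] H) :=
    MonoidHom.mk' (fun d => match d with
      | .r i => g i
      | .sr i => ω * g i) (by
      rintro (i | i) (j | j)
      · exact hgadd i j
      · show ω * g (j - i) = g i * (ω * g j)
        rw [← mul_assoc, hgconj', mul_assoc, ← hgadd, sub_eq_neg_add]
      · show ω * g (i + j) = (ω * g i) * g j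
        rw [hgadd, mul_assoc]
      · show g (j - i) = (ω * g i) * (ω * g j)
        rw [mul_assoc, ← mul_assoc (g i), hgconj', ← mul_assoc, ← mul_assoc, hω2,
          one_mul, ← hgadd, sub_eq_neg_add])
  -- ω is not a power of σ
  have hωden : 1 / y + C δ⁻¹ ≠ 0 := by
    intro h
    apply hyne δ⁻¹
    apply ω.injective
    rw [map_add, hωy, hcomm, map_zero, h]
  obtain ⟨v, hvdef⟩ : ∃ v : H, v = 1 / y := ⟨_, rfl⟩
  have hv : v * y = 1 := by rw [hvdef, one_div, inv_mul_cancel₀ hy0]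
  have hvδ : v + C δ⁻¹ ≠ 0 := by rw [hvdef]; exact hωden
  have hωz : ω z = C (δ * δ) * z⁻¹ := by
    rw [hzdef, map_div₀, map_add, map_add, hcomm, hcomm, hωy, map_mul, inv_div, ← hvdef,
      ← mul_div_assoc, div_eq_div_iff hvδ (hyne δ)]
    linear_combination (1 - C δ * C δ) * hv +
      (-(v * C δ + C δ * y + 1 + C δ * C δ⁻¹)) * hδδ
  have hωnot : ∀ m : ℕ, ω ≠ σ ^ m := by
    intro m hωm
    have hδm0 : ((δ * δ) ^ m : Fq2) ≠ 0 := pow_ne_zero _ (mul_ne_zero hδ0 hδ0)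
    have h1 : C (δ * δ) * z⁻¹ = C ((δ * δ) ^ m) * z := by rw [← hωz, hωm, hσkz]
    have hCm : C ((δ * δ) ^ m) ≠ 0 := fun h => hδm0 (hCinj (by rw [map_zero]; exact h))
    have h2 : C (δ * δ) = C ((δ * δ) ^ m) * z ^ 2 := by
      calc C (δ * δ) = C (δ * δ) * z⁻¹ * z := (inv_mul_cancel_right₀ hz0 _).symm
      _ = C ((δ * δ) ^ m) * z * z := by rw [h1]
      _ = C ((δ * δ) ^ m) * z ^ 2 := by ring
    have hz2 : z ^ 2 = C ((δ * δ) * ((δ * δ) ^ m)⁻¹) := by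
      rw [map_mul, map_inv₀, eq_mul_inv_iff_mul_eq₀ hCm, mul_comm (z ^ 2), ← h2]
    have halg : IsAlgebraic Fq2 z :=
      ⟨Polynomial.X ^ 2 - Polynomial.C ((δ * δ) * ((δ * δ) ^ m)⁻¹),
        Polynomial.X_pow_sub_C_ne_zero two_pos _, by simp [hz2, hCdef]⟩
    obtain ⟨b, hb⟩ := hconst z halg
    have hzy : C b * (y + C δ⁻¹) = y + C δ := by
      rw [hb, hzdef, div_mul_cancel₀ _ (hyne δ⁻¹)]
    by_cases hb1 : b = 1
    · rw [hb1, map_one, one_mul] at hzy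
      exact hδne (by linear_combination hzy)
    · apply hyt
      have hbne : C (b - 1) ≠ 0 := by
        intro h
        exact hb1 (sub_eq_zero.mp (hCinj (h.trans (map_zero C).symm)))
      have hyval : y = C ((δ - b * δ⁻¹) / (b - 1)) := by
        rw [map_div₀, eq_div_iff hbne, map_sub, map_sub, map_mul, map_one]
        linear_combination hzy
      rw [hyval]
      exact isAlgebraic_algebraMap _
  -- injectivity of F
  have hFinj : Function.Injective F := by
    apply (injective_iff_map_eq_one F).mpr
    rintro (i | i) h
    · have h1 : σ ^ i.val = 1 := h
      have h2 : n ∣ i.val := by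
        have := orderOf_dvd_of_pow_eq_one h1
        rwa [hords] at this
      have h3 : i.val = 0 := Nat.eq_zero_of_dvd_of_lt h2 (ZMod.val_lt i)
      have h4 : i = 0 := (ZMod.val_eq_zero i).mp h3
      rw [h4, DihedralGroup.one_def]
    · exfalso
      have h1 : ω = (σ ^ i.val)⁻¹ := eq_inv_of_mul_eq_one_left h
      rw [← inv_pow, ← hσpred, ← pow_mul] at h1
      exact hωnot _ h1
  -- range of F
  have hτσω : τ = σ * ω := by rw [hσ, mul_assoc, hω2, mul_one]
  have hσmem : σ ∈ Subgroup.closure ({τ, ω} : Set (H ≃ₐ[Fq2] H)) := by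
    rw [hσ]
    exact mul_mem (Subgroup.subset_closure (by simp)) (Subgroup.subset_closure (by simp))
  have hωmem : ω ∈ Subgroup.closure ({τ, ω} : Set (H ≃ₐ[Fq2] H)) :=
    Subgroup.subset_closure (by simp)
  have hτrange : τ ∈ F.range := by
    refine ⟨.sr (-1), ?_⟩
    show ω * g (-1) = τ
    rw [hgconj, neg_neg, hτσω]
    congr 1
    show σ ^ (1 : ZMod n).val = σ
    rw [ZMod.val_one n, pow_one]
  have hωrange : ω ∈ F.range := ⟨.sr 0, by show ω * g 0 = ω; rw [hg0, mul_one]⟩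
  have hrange : F.range = Subgroup.closure ({τ, ω} : Set (H ≃ₐ[Fq2] H)) := by
    apply le_antisymm
    · rintro _ ⟨d, rfl⟩
      cases d with
      | r i => exact pow_mem hσmem _
      | sr i => exact mul_mem hωmem (pow_mem hσmem _)
    · rw [Subgroup.closure_le]
      rintro t (rfl | rfl)
      · exact hτrange
      · exact hωrange
  exact ⟨((MonoidHom.ofInjective hFinj).trans (MulEquiv.subgroupCongr hrange)).symm⟩
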